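/- arXiv:2302.10260 — 3 statements merged into one kernel-verified Lean document; each statement's English description precedes it below -/
import Mathlib

section
/- Let p : ℝ → ℝ be a positive, continuously differentiable probability density and f : ℝ → ℝ continuously differentiable, such that the product f'·p is integrable, f''·p is integrable, (log p)'·f'·p is integrable, and f'(x)·p(x) → 0 as x → ±∞. Then ∫ f'(x) · (log p)'(x) · p(x) dx = -∫ f''(x) · p(x) dx. -/
open MeasureTheory Filter

/-- Integration by parts step of score matching in one dimension:
`∫ f' (log p)' p = -∫ f'' p`. -/
theorem ibp_score_matching (p f : ℝ → ℝ)
    (hp : ∀ x, 0 < p x) (hpC1 : ContDiff ℝ 1 p) (hfC2 : ContDiff ℝ 2 f)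
    (hint1 : MeasureTheory.Integrable (fun x => deriv f x * p x))
    (hint2 : MeasureTheory.Integrable (fun x => deriv (deriv f) x * p x))
    (hint3 : MeasureTheory.Integrable
      (fun x => deriv (fun y => Real.log (p y)) x * deriv f x * p x))
    (htop : Filter.Tendsto (fun x => deriv f x * p x) Filter.atTop (nhds 0))
    (hbot : Filter.Tendsto (fun x => deriv f x * p x) Filter.atBot (nhds 0)) :
    ∫ x, deriv f x * deriv (fun y => Real.log (p y)) x * p x
      = -∫ x, deriv (deriv f) x * p x := by
  have hpd : ∀ x, DifferentiableAt ℝ p x := fun x =>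
    (hpC1.differentiable one_ne_zero).differentiableAt
  have hfd : Differentiable ℝ f := hfC2.differentiable two_ne_zero
  have hfd' : ∀ x, DifferentiableAt ℝ (deriv f) x := fun x =>
    ((hfC2.iterate_deriv' 1 1).differentiable one_ne_zero).differentiableAt
  have hlog : ∀ x, deriv (fun y => Real.log (p y)) x = deriv p x / p x := by
    intro x
    exact ((hpd x).hasDerivAt.log (hp x).ne').deriv
  have key : ∀ x, deriv f x * deriv (fun y => Real.log (p y)) x * p x
      = deriv f x * deriv p x := by
    intro x
    rw [hlog x]
    rw [mul_assoc, div_mul_cancel₀ _ (hp x).ne']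
  have key3 : ∀ x, deriv (fun y => Real.log (p y)) x * deriv f x * p x
      = deriv f x * deriv p x := by
    intro x; rw [← key x]; ring
  have hint3' : Integrable (fun x => deriv f x * deriv p x) := by
    have := hint3
    simpa only [key3] using this
  have hderiv : ∀ x, HasDerivAt (fun x => deriv f x * p x)
      (deriv (deriv f) x * p x + deriv f x * deriv p x) x := by
    intro x
    exact ((hfd' x).hasDerivAt).mul (hpd x).hasDerivAt
  have hzero : ∫ x, (deriv (deriv f) x * p x + deriv f x * deriv p x) = 0 := by
    simpa using MeasureTheory.integral_of_hasDerivAt_of_tendsto hderiv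
      (hint2.add hint3') hbot htop
  rw [MeasureTheory.integral_add hint2 hint3'] at hzero
  have : ∫ x, deriv f x * deriv p x = -∫ x, deriv (deriv f) x * p x := by
    linarith
  calc ∫ x, deriv f x * deriv (fun y => Real.log (p y)) x * p x
      = ∫ x, deriv f x * deriv p x := by simp only [key]
    _ = -∫ x, deriv (deriv f) x * p x := this
end

section
/- Under the assumptions of the previous integration-by-parts lemma, the explicit score matching objective ∫ (1/2)(f'(x) - (log p)'(x))² p(x) dx equals ∫ [(1/2) f'(x)² + f''(x)] p(x) dx plus the constant ∫ (1/2)((log p)'(x))² p(x) dx, which does not depend on f. -/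
open MeasureTheory Filter

/-- Explicit score matching equals implicit score matching plus a constant
independent of `f`, in one dimension. -/
theorem esm_eq_ism_add_const (p f : ℝ → ℝ)
    (hp : ∀ x, 0 < p x) (hpC1 : ContDiff ℝ 1 p) (hfC2 : ContDiff ℝ 2 f)
    (hint1 : MeasureTheory.Integrable (fun x => deriv f x * p x))
    (hint2 : MeasureTheory.Integrable (fun x => deriv (deriv f) x * p x))
    (hint3 : MeasureTheory.Integrable
      (fun x => deriv (fun y => Real.log (p y)) x * deriv f x * p x))
    (hint4 : MeasureTheory.Integrable (fun x => (deriv f x) ^ 2 * p x))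
    (hint5 : MeasureTheory.Integrable
      (fun x => (deriv (fun y => Real.log (p y)) x) ^ 2 * p x))
    (htop : Filter.Tendsto (fun x => deriv f x * p x) Filter.atTop (nhds 0))
    (hbot : Filter.Tendsto (fun x => deriv f x * p x) Filter.atBot (nhds 0)) :
    ∫ x, (1 / 2) * (deriv f x - deriv (fun y => Real.log (p y)) x) ^ 2 * p x
      = (∫ x, ((1 / 2) * (deriv f x) ^ 2 + deriv (deriv f) x) * p x)
        + ∫ x, (1 / 2) * (deriv (fun y => Real.log (p y)) x) ^ 2 * p x := by
  set s : ℝ → ℝ := fun x => deriv (fun y => Real.log (p y)) x with hs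
  have hpd : Differentiable ℝ p := hpC1.differentiable one_ne_zero
  have hsx : ∀ x, s x = deriv p x / p x := fun x =>
    ((hpd x).hasDerivAt.log (hp x).ne').deriv
  have hsp : ∀ x, s x * p x = deriv p x := by
    intro x; rw [hsx]; field_simp [(hp x).ne']
  -- f' is differentiable
  have hf' : ContDiff ℝ 1 (deriv f) := ((contDiff_succ_iff_deriv (n := 1)).mp (by exact_mod_cast hfC2)).2.2
  have hf'd : Differentiable ℝ (deriv f) := hf'.differentiable one_ne_zero
  -- integration by parts on the real line
  have hderiv : ∀ x, HasDerivAt (fun x => deriv f x * p x)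
      (deriv (deriv f) x * p x + s x * deriv f x * p x) x := by
    intro x
    have := ((hf'd x).hasDerivAt).mul ((hpd x).hasDerivAt)
    refine this.congr_deriv ?_
    rw [mul_comm (s x) (deriv f x), mul_assoc, hsp]
  have hint23 : Integrable (fun x => deriv (deriv f) x * p x + s x * deriv f x * p x) :=
    hint2.add hint3
  have hibp : (∫ x, (deriv (deriv f) x * p x + s x * deriv f x * p x)) = 0 := by
    rw [integral_of_hasDerivAt_of_tendsto hderiv hint23 hbot htop, sub_zero]
  have key : (∫ x, s x * deriv f x * p x) = - ∫ x, deriv (deriv f) x * p x := by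
    rw [integral_add hint2 hint3] at hibp
    linarith
  have h4 : Integrable (fun x => (1/2 : ℝ) * (deriv f x) ^ 2 * p x) := by
    have := hint4.const_mul (1/2 : ℝ)
    simpa [mul_assoc] using this
  have h5 : Integrable (fun x => (1/2 : ℝ) * (s x) ^ 2 * p x) := by
    have := hint5.const_mul (1/2 : ℝ)
    simpa [mul_assoc] using this
  have lhs_eq : (fun x => (1 / 2) * (deriv f x - s x) ^ 2 * p x)
      = fun x => ((1/2 : ℝ) * (deriv f x) ^ 2 * p x + (1/2 : ℝ) * (s x) ^ 2 * p x)
          - s x * deriv f x * p x := by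
    funext x; ring
  have rhs_eq : (fun x => ((1 / 2) * (deriv f x) ^ 2 + deriv (deriv f) x) * p x)
      = fun x => (1/2 : ℝ) * (deriv f x) ^ 2 * p x + deriv (deriv f) x * p x := by
    funext x; ring
  have h45 : Integrable (fun x => (1/2 : ℝ) * (deriv f x) ^ 2 * p x
      + (1/2 : ℝ) * (s x) ^ 2 * p x) := h4.add h5
  rw [lhs_eq, rhs_eq, integral_sub h45 hint3, integral_add h4 h5,
    integral_add h4 hint2, key]
  ring
end

section
/- Let p be a C² strictly positive density on ℝ^D and f : ℝ^D → ℝ be C². Fix a distribution p_V on ℝ^D for slicing directions v with finite second moments. Then for each fixed v, under integrability and decay conditions (v^T ∇f(x) · p(x) → 0 along the direction v at infinity), E_{x∼p}[(1/2)(v^T∇f(x) − v^T∇log p(x))²] = E_{x∼p}[(1/2)(v^T∇f(x))² + v^T (Hess f)(x) v] + C(v), where C(v) = E_{x∼p}[(1/2)(v^T∇log p(x))²] does not depend on f. -/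
open MeasureTheory Measure Module Topology Filter

variable {E : Type*} [NormedAddCommGroup E] [NormedSpace ℝ E] [MeasurableSpace E]

/-- 1D: integral of derivative with limits 0 at both ends is zero. -/
lemma aux1d {g g' : ℝ → ℝ} (hderiv : ∀ t, HasDerivAt g (g' t) t)
    (hg' : Integrable g') (hbot : Tendsto g atBot (𝓝 0))
    (htop : Tendsto g atTop (𝓝 0)) : ∫ t, g' t = 0 := by
  simpa using integral_of_hasDerivAt_of_tendsto hderiv hg' hbot htop

lemma auxProd {μ : Measure E} [SigmaFinite μ] {G G' : E × ℝ → ℝ}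
    (hG' : Integrable G' (μ.prod volume))
    (hG : ∀ z, HasLineDerivAt ℝ G (G' z) z (0, 1))
    (hbot : ∀ x : E, Tendsto (fun t => G (x, t)) atBot (𝓝 0))
    (htop : ∀ x : E, Tendsto (fun t => G (x, t)) atTop (𝓝 0)) :
    ∫ z, G' z ∂(μ.prod volume) = 0 := by
  rw [integral_prod _ hG']
  rw [← integral_zero E ℝ (μ := μ)]
  apply integral_congr_ae
  filter_upwards [hG'.prod_right_ae] with x hx
  apply aux1d ?_ hx (hbot x) (htop x)
  intro t
  convert (hG (x, t)).scomp_of_eq t ((hasDerivAt_id t).add (hasDerivAt_const t (-t))) (by simp)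
    <;> first | rfl | simp

lemma auxProdHaar [BorelSpace E] [FiniteDimensional ℝ E]
    {μ : Measure (E × ℝ)} [IsAddHaarMeasure μ] {G G' : E × ℝ → ℝ}
    (hG' : Integrable G' μ)
    (hG : ∀ z, HasLineDerivAt ℝ G (G' z) z (0, 1))
    (hbot : ∀ x : E, Tendsto (fun t => G (x, t)) atBot (𝓝 0))
    (htop : ∀ x : E, Tendsto (fun t => G (x, t)) atTop (𝓝 0)) :
    ∫ z, G' z ∂μ = 0 := by
  let ν : Measure E := addHaar
  have A : ν.prod volume = (addHaarScalarFactor (ν.prod volume) μ) • μ :=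
    isAddLeftInvariant_eq_smul _ _
  have HG' : Integrable G' (ν.prod volume) := by
    rw [A]; exact hG'.smul_measure_nnreal
  rw [isAddLeftInvariant_eq_smul μ (ν.prod volume)]
  simp [auxProd HG' hG hbot htop]

/-- Integral of a directional derivative is zero if the derivative is
integrable and the function tends to zero along lines in direction `v`. -/
lemma integral_lineDeriv_eq_zero [BorelSpace E] [FiniteDimensional ℝ E]
    {μ : Measure E} [IsAddHaarMeasure μ] {g g' : E → ℝ} {v : E}
    (hg' : Integrable g' μ)
    (hg : ∀ x, HasLineDerivAt ℝ g (g' x) x v)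
    (hbot : ∀ x₀ : E, Tendsto (fun t : ℝ => g (x₀ + t • v)) atBot (𝓝 0))
    (htop : ∀ x₀ : E, Tendsto (fun t : ℝ => g (x₀ + t • v)) atTop (𝓝 0)) :
    ∫ x, g' x ∂μ = 0 := by
  rcases eq_or_ne v 0 with rfl | hv
  · have Hg' : ∀ x, g' x = 0 := by
      intro x
      simpa [(hasLineDerivAt_zero (f := g) (x := x)).lineDeriv] using (hg x).lineDeriv.symm
    simp [Hg']
  have : Nontrivial E := nontrivial_iff.2 ⟨v, 0, hv⟩
  let n := finrank ℝ E
  let E' := Fin (n - 1) → ℝ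
  obtain ⟨L, hL⟩ : ∃ L : E ≃L[ℝ] (E' × ℝ), L v = (0, 1) := by
    have : finrank ℝ (E' × ℝ) = n := by simpa [this, E'] using Nat.sub_add_cancel finrank_pos
    have L₀ : E ≃L[ℝ] (E' × ℝ) := (ContinuousLinearEquiv.ofFinrankEq this).symm
    obtain ⟨M, hM⟩ : ∃ M : (E' × ℝ) ≃L[ℝ] (E' × ℝ), M (L₀ v) = (0, 1) := by
      apply SeparatingDual.exists_continuousLinearEquiv_apply_eq
      · simpa using hv
      · simp
    exact ⟨L₀.trans M, by simp [hM]⟩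
  let ν := Measure.map L μ
  suffices H : ∫ z, g' (L.symm z) ∂ν = 0 by
    have hμ : μ = Measure.map L.symm ν := by
      simp [ν, Measure.map_map L.symm.continuous.measurable L.continuous.measurable]
    have hLe : IsClosedEmbedding L.symm := L.symm.toHomeomorph.isClosedEmbedding
    rw [hμ, hLe.integral_map]
    simpa using H
  have L_emb : MeasurableEmbedding L := L.toHomeomorph.measurableEmbedding
  apply auxProdHaar (G := g ∘ L.symm)
  · simpa [ν, L_emb.integrable_map_iff, Function.comp_def] using hg'
  · intro z
    have hgL : g = (g ∘ L.symm) ∘ (L : E →ₗ[ℝ] (E' × ℝ)) := by ext y; simp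
    have h := hg (L.symm z)
    rw [hgL] at h
    convert h.of_comp using 1
    · simp
    · simp [← hL]
  · intro x
    have : ∀ t : ℝ, (g ∘ L.symm) (x, t) = g (L.symm (x, 0) + t • v) := by
      intro t
      have : (x, t) = (x, (0:ℝ)) + t • ((0 : E'), (1:ℝ)) := by simp
      rw [Function.comp_apply, this, ← hL]
      simp [L.symm.map_add, L.symm.map_smul]
    have key : (fun t : ℝ => (g ∘ L.symm) (x, t)) = fun t => g (L.symm (x, 0) + t • v) :=
      funext this
    rw [key]; exact hbot _
  · intro x
    have : ∀ t : ℝ, (g ∘ L.symm) (x, t) = g (L.symm (x, 0) + t • v) := by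
      intro t
      have : (x, t) = (x, (0:ℝ)) + t • ((0 : E'), (1:ℝ)) := by simp
      rw [Function.comp_apply, this, ← hL]
      simp [L.symm.map_add, L.symm.map_smul]
    have key : (fun t : ℝ => (g ∘ L.symm) (x, t)) = fun t => g (L.symm (x, 0) + t • v) :=
      funext this
    rw [key]; exact htop _

open MeasureTheory

/-- Sliced score matching identity for a fixed slicing direction `v`:
the sliced ESM objective equals the sliced ISM objective plus a constant
`C(v)` not depending on `f`. -/
theorem sliced_score_matching (D : ℕ)
    (p f : EuclideanSpace ℝ (Fin D) → ℝ) (v : EuclideanSpace ℝ (Fin D))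
    (hp : ∀ x, 0 < p x) (hpC2 : ContDiff ℝ 2 p) (hfC2 : ContDiff ℝ 2 f)
    (hdecay : ∀ x₀ : EuclideanSpace ℝ (Fin D),
      Filter.Tendsto (fun t : ℝ => fderiv ℝ f (x₀ + t • v) v * p (x₀ + t • v))
        Filter.atTop (nhds 0) ∧
      Filter.Tendsto (fun t : ℝ => fderiv ℝ f (x₀ + t • v) v * p (x₀ + t • v))
        Filter.atBot (nhds 0))
    (hint1 : Integrable (fun x =>
      (1 / 2) * (fderiv ℝ f x v - fderiv ℝ (fun y => Real.log (p y)) x v) ^ 2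
        * p x))
    (hint2 : Integrable (fun x =>
      ((1 / 2) * (fderiv ℝ f x v) ^ 2
        + fderiv ℝ (fun y => fderiv ℝ f y v) x v) * p x))
    (hint3 : Integrable (fun x =>
      (1 / 2) * (fderiv ℝ (fun y => Real.log (p y)) x v) ^ 2 * p x)) :
    ∫ x, (1 / 2) * (fderiv ℝ f x v - fderiv ℝ (fun y => Real.log (p y)) x v) ^ 2
          * p x
      = (∫ x, ((1 / 2) * (fderiv ℝ f x v) ^ 2
            + fderiv ℝ (fun y => fderiv ℝ f y v) x v) * p x)
        + ∫ x, (1 / 2) * (fderiv ℝ (fun y => Real.log (p y)) x v) ^ 2 * p x := by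
  have hpd : Differentiable ℝ p := hpC2.differentiable two_ne_zero
  have had : Differentiable ℝ (fun y => fderiv ℝ f y v) :=
    ((ContinuousLinearMap.apply ℝ ℝ v).contDiff.comp
      (hfC2.fderiv_right (m := 1) le_rfl)).differentiable one_ne_zero
  have hb : ∀ x, fderiv ℝ (fun y => Real.log (p y)) x v * p x = fderiv ℝ p x v := by
    intro x
    have hlog : HasFDerivAt (fun y => Real.log (p y)) ((p x)⁻¹ • fderiv ℝ p x) x :=
      (Real.hasDerivAt_log (hp x).ne').comp_hasFDerivAt x (hpd x).hasFDerivAt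
    rw [hlog.fderiv]
    rw [ContinuousLinearMap.smul_apply, smul_eq_mul]
    rw [inv_mul_eq_div, div_mul_eq_mul_div, mul_comm]
    exact mul_div_cancel_left₀ _ (hp x).ne'
  have key : ∀ x,
      ((1 / 2) * (fderiv ℝ f x v) ^ 2 + fderiv ℝ (fun y => fderiv ℝ f y v) x v) * p x
        + (1 / 2) * (fderiv ℝ (fun y => Real.log (p y)) x v) ^ 2 * p x
        - (1 / 2) * (fderiv ℝ f x v - fderiv ℝ (fun y => Real.log (p y)) x v) ^ 2 * p x
      = fderiv ℝ (fun y => fderiv ℝ f y v) x v * p x + fderiv ℝ f x v * fderiv ℝ p x v := by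
    intro x
    rw [← hb x]
    ring
  have hgline : ∀ x, HasLineDerivAt ℝ (fun y => fderiv ℝ f y v * p y)
      (fderiv ℝ (fun y => fderiv ℝ f y v) x v * p x + fderiv ℝ f x v * fderiv ℝ p x v) x v := by
    intro x
    have h1 : HasFDerivAt (fun y => fderiv ℝ f y v)
        (fderiv ℝ (fun y => fderiv ℝ f y v) x) x := (had x).hasFDerivAt
    have h2 : HasFDerivAt p (fderiv ℝ p x) x := (hpd x).hasFDerivAt
    have h := (h1.mul h2).hasLineDerivAt v
    convert h using 1 <;> first | rfl | skip
    simp [ContinuousLinearMap.add_apply, ContinuousLinearMap.smul_apply, smul_eq_mul]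
    ring
  have hg'int : Integrable (fun x =>
      fderiv ℝ (fun y => fderiv ℝ f y v) x v * p x + fderiv ℝ f x v * fderiv ℝ p x v) :=
    ((hint2.add hint3).sub hint1).congr (Filter.Eventually.of_forall fun x => by
      simpa using key x)
  have hzero : ∫ x,
      (fderiv ℝ (fun y => fderiv ℝ f y v) x v * p x + fderiv ℝ f x v * fderiv ℝ p x v) = 0 :=
    integral_lineDeriv_eq_zero hg'int hgline (fun x₀ => (hdecay x₀).2) (fun x₀ => (hdecay x₀).1)
  rw [show (fun x : EuclideanSpace ℝ (Fin D) =>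
        fderiv ℝ (fun y => fderiv ℝ f y v) x v * p x + fderiv ℝ f x v * fderiv ℝ p x v)
      = fun x => ((1 / 2) * (fderiv ℝ f x v) ^ 2 + fderiv ℝ (fun y => fderiv ℝ f y v) x v) * p x
        + (1 / 2) * (fderiv ℝ (fun y => Real.log (p y)) x v) ^ 2 * p x
        - (1 / 2) * (fderiv ℝ f x v - fderiv ℝ (fun y => Real.log (p y)) x v) ^ 2 * p x
      from funext fun x => (key x).symm] at hzero
  have hAB : Integrable (fun x =>
      ((1 / 2) * (fderiv ℝ f x v) ^ 2 + fderiv ℝ (fun y => fderiv ℝ f y v) x v) * p x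
        + (1 / 2) * (fderiv ℝ (fun y => Real.log (p y)) x v) ^ 2 * p x) := hint2.add hint3
  have h2 : ∫ x, (((1 / 2) * (fderiv ℝ f x v) ^ 2 + fderiv ℝ (fun y => fderiv ℝ f y v) x v) * p x
        + (1 / 2) * (fderiv ℝ (fun y => Real.log (p y)) x v) ^ 2 * p x
        - (1 / 2) * (fderiv ℝ f x v - fderiv ℝ (fun y => Real.log (p y)) x v) ^ 2 * p x)
      = (∫ x, (((1 / 2) * (fderiv ℝ f x v) ^ 2 + fderiv ℝ (fun y => fderiv ℝ f y v) x v) * p x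
        + (1 / 2) * (fderiv ℝ (fun y => Real.log (p y)) x v) ^ 2 * p x))
        - ∫ x, (1 / 2) * (fderiv ℝ f x v - fderiv ℝ (fun y => Real.log (p y)) x v) ^ 2 * p x :=
    integral_sub hAB hint1
  have h3 : ∫ x, (((1 / 2) * (fderiv ℝ f x v) ^ 2 + fderiv ℝ (fun y => fderiv ℝ f y v) x v) * p x
        + (1 / 2) * (fderiv ℝ (fun y => Real.log (p y)) x v) ^ 2 * p x)
      = (∫ x, ((1 / 2) * (fderiv ℝ f x v) ^ 2 + fderiv ℝ (fun y => fderiv ℝ f y v) x v) * p x)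
        + ∫ x, (1 / 2) * (fderiv ℝ (fun y => Real.log (p y)) x v) ^ 2 * p x :=
    integral_add hint2 hint3
  rw [h2, h3] at hzero
  linarith
end
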